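/- The term (ψ(n-3) + 3ψ(n-2))/2^(n+3) tends to 0 as n → ∞; consequently c(n) - 3n/16 converges to -3/64, where c(n) = a(n-1). -/
import Mathlib

theorem stmt_17
    (psi : ℕ → ℤ)
    (hpsi0 : psi 0 = 1) (hpsi1 : psi 1 = 0)
    (hpsi : ∀ n : ℕ, 2 ≤ n → psi n = -2 * psi (n - 2) - psi (n - 1))
    (i a : ℕ → ℚ)
    (ha0 : a 0 = 0) (hi1 : i 1 = 1) (ha1 : a 1 = 0)
    (ha : ∀ n : ℕ, 2 ≤ n → a n = (i (n - 1) + a (n - 1)) / 2)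
    (hi23 : ∀ n : ℕ, 2 ≤ n → n ≤ 3 → i n = i (n - 1))
    (hi4 : i 4 = (i 1 + a 1 + i 2 + a 2) / 2)
    (hi5 : ∀ n : ℕ, 5 ≤ n → i n = (i 2 + a 2 + i (n - 3) + a (n - 3)) / 2) :
    Filter.Tendsto (fun n : ℕ => (((psi (n - 3) : ℝ) + 3 * psi (n - 2)) / 2 ^ (n + 3))) Filter.atTop (nhds 0) ∧
    Filter.Tendsto (fun n : ℕ => (a (n - 1) : ℝ) - 3 * n / 16) Filter.atTop (nhds (-3 / 64)) := by
  -- clean recurrence for psi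
  have hpsi' : ∀ m : ℕ, psi (m + 2) = -2 * psi m - psi (m + 1) := by
    intro m
    have := hpsi (m + 2) (by omega)
    simpa using this
  -- energy invariant
  have hE : ∀ n : ℕ, 2 * psi n ^ 2 + psi n * psi (n + 1) + psi (n + 1) ^ 2 = 2 ^ (n + 1) := by
    intro n
    induction n with
    | zero => simp [hpsi0, hpsi1]
    | succ k ih =>
      have h2 := hpsi' k
      rw [h2]
      ring_nf
      ring_nf at ih
      linarith
  -- bound on psi
  have hsq : ∀ n : ℕ, ((psi n : ℝ)) ^ 2 ≤ 2 ^ (n + 1) := by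
    intro n
    have h := hE n
    have h' : (2 * (psi n : ℝ) ^ 2 + psi n * psi (n + 1) + psi (n + 1) ^ 2) = 2 ^ (n + 1) := by
      exact_mod_cast congrArg (fun z : ℤ => (z : ℝ)) h
    nlinarith [sq_nonneg ((psi n : ℝ) / 2 + psi (n + 1)), sq_nonneg ((psi n : ℝ))]
  have hs2 : (1:ℝ) ≤ Real.sqrt 2 := by
    rw [show (1:ℝ) = Real.sqrt 1 by simp]
    exact Real.sqrt_le_sqrt (by norm_num)
  have habs : ∀ n : ℕ, |(psi n : ℝ)| ≤ Real.sqrt 2 ^ (n + 1) := by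
    intro n
    have hb : (0:ℝ) ≤ Real.sqrt 2 ^ (n + 1) := pow_nonneg (Real.sqrt_nonneg 2) _
    have : (Real.sqrt 2 ^ (n + 1)) ^ 2 = 2 ^ (n + 1) := by
      rw [← pow_mul, mul_comm, pow_mul, Real.sq_sqrt (by norm_num)]
    have h2 : ((psi n : ℝ)) ^ 2 ≤ (Real.sqrt 2 ^ (n + 1)) ^ 2 := by rw [this]; exact hsq n
    nlinarith [abs_nonneg ((psi n : ℝ)), sq_abs ((psi n : ℝ))]
  -- first limit
  have hgeo : Filter.Tendsto (fun n : ℕ => (Real.sqrt 2 / 2) ^ n / 2) Filter.atTop (nhds 0) := by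
    have h1 : Real.sqrt 2 / 2 < 1 := by
      have : Real.sqrt 2 < 2 := by
        nlinarith [Real.sq_sqrt (show (0:ℝ) ≤ 2 by norm_num), Real.sqrt_nonneg 2]
      linarith
    have h0 : (0:ℝ) ≤ Real.sqrt 2 / 2 := by positivity
    have := tendsto_pow_atTop_nhds_zero_of_lt_one h0 h1
    simpa using this.div_const 2
  have hlim1 : Filter.Tendsto (fun n : ℕ => (((psi (n - 3) : ℝ) + 3 * psi (n - 2)) / 2 ^ (n + 3))) Filter.atTop (nhds 0) := by
    refine squeeze_zero_norm' (a := fun n : ℕ => (Real.sqrt 2 / 2) ^ n / 2) ?_ hgeo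
    filter_upwards [Filter.eventually_atTop.2 ⟨3, fun n hn => hn⟩] with n hn
    have h1 : |(psi (n - 3) : ℝ)| ≤ Real.sqrt 2 ^ n := by
      have := habs (n - 3)
      calc |(psi (n - 3) : ℝ)| ≤ Real.sqrt 2 ^ (n - 3 + 1) := this
        _ ≤ Real.sqrt 2 ^ n := pow_le_pow_right₀ hs2 (by omega)
    have h2 : |(psi (n - 2) : ℝ)| ≤ Real.sqrt 2 ^ n := by
      have := habs (n - 2)
      calc |(psi (n - 2) : ℝ)| ≤ Real.sqrt 2 ^ (n - 2 + 1) := this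
        _ ≤ Real.sqrt 2 ^ n := pow_le_pow_right₀ hs2 (by omega)
    have hp : (0:ℝ) < 2 ^ (n + 3) := by positivity
    rw [Real.norm_eq_abs, abs_div, abs_of_pos hp, div_le_iff₀ hp]
    have htri : |(psi (n - 3) : ℝ) + 3 * psi (n - 2)| ≤ 4 * Real.sqrt 2 ^ n := by
      calc |(psi (n - 3) : ℝ) + 3 * psi (n - 2)| ≤ |(psi (n - 3) : ℝ)| + |3 * (psi (n - 2) : ℝ)| := abs_add_le _ _
        _ = |(psi (n - 3) : ℝ)| + 3 * |(psi (n - 2) : ℝ)| := by rw [abs_mul]; norm_num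
        _ ≤ Real.sqrt 2 ^ n + 3 * Real.sqrt 2 ^ n := by linarith
        _ = 4 * Real.sqrt 2 ^ n := by ring
    calc |(psi (n - 3) : ℝ) + 3 * psi (n - 2)| ≤ 4 * Real.sqrt 2 ^ n := htri
      _ = (Real.sqrt 2 / 2) ^ n / 2 * 2 ^ (n + 3) := by
          rw [div_pow]
          field_simp
          ring
  refine ⟨hlim1, ?_⟩
  -- basic values
  have hi2 : i 2 = 1 := by rw [hi23 2 (by norm_num) (by norm_num), hi1]
  have hi3 : i 3 = 1 := by rw [hi23 3 (by norm_num) (by norm_num), hi2]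
  have ha2 : a 2 = 1 / 2 := by rw [ha 2 (by norm_num)]; norm_num [hi1, ha1]
  have ha3 : a 3 = 3 / 4 := by rw [ha 3 (by norm_num)]; norm_num [hi2, ha2]
  have hi4' : i 4 = 5 / 4 := by rw [hi4, hi1, ha1, hi2, ha2]; norm_num
  have ha4 : a 4 = 7 / 8 := by rw [ha 4 (by norm_num)]; norm_num [hi3, ha3]
  -- i formula
  have him : ∀ m : ℕ, i (m + 4) = 3 / 4 + a (m + 2) := by
    intro m
    match m with
    | 0 => rw [hi4', ha2]; norm_num
    | k + 1 =>
      have h5 := hi5 (k + 5) (by omega)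
      have hak : a (k + 3) = (i (k + 2) + a (k + 2)) / 2 := by
        have := ha (k + 3) (by omega)
        simpa using this
      have : (k + 5 - 3) = k + 2 := by omega
      rw [show k + 1 + 4 = k + 5 by ring, h5, this, hi2, ha2, hak]
      ring
  -- combined recurrence for a
  have harec : ∀ m : ℕ, a (m + 5) = 3 / 8 + a (m + 4) / 2 + a (m + 2) / 2 := by
    intro m
    have h1 : a (m + 5) = (i (m + 4) + a (m + 4)) / 2 := by
      have := ha (m + 5) (by omega)
      simpa using this
    rw [h1, him m]
    ring
  -- explicit formula
  set f : ℕ → ℚ := fun m => 3 * (m + 3) / 16 - 3 / 64 - ((psi m : ℚ) + 3 * psi (m + 1)) / 2 ^ (m + 6) with hf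
  have key : ∀ m : ℕ, a (m + 2) = f m ∧ a (m + 3) = f (m + 1) ∧ a (m + 4) = f (m + 2) := by
    intro m
    induction m with
    | zero =>
      have hpsi2 : psi 2 = -2 := by have := hpsi' 0; rw [this, hpsi0, hpsi1]; ring
      have hpsi3 : psi 3 = 2 := by have := hpsi' 1; rw [this, hpsi1, hpsi2]; ring
      refine ⟨?_, ?_, ?_⟩ <;>
        simp only [hf, ha2, ha3, ha4, hpsi0, hpsi1, hpsi2, hpsi3] <;> norm_num
    | succ k ih =>
      obtain ⟨h2, h3, h4⟩ := ih
      refine ⟨h3, h4, ?_⟩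
      have hrec := harec k
      rw [show k + 1 + 4 = k + 5 by ring, hrec, h4, h2, hf]
      have e1 : psi (k + 3) = -2 * psi (k + 1) - psi (k + 2) := by
        have := hpsi' (k + 1); rw [show k + 1 + 2 = k + 3 by ring] at this; exact this
      have e2 : psi (k + 4) = -2 * psi (k + 2) - psi (k + 3) := by
        have := hpsi' (k + 2); rw [show k + 2 + 2 = k + 4 by ring] at this; exact this
      have e0 : psi (k + 2) = -2 * psi k - psi (k + 1) := hpsi' k
      simp only [e2, e1, e0]
      push_cast
      have h2pow : (2:ℚ) ^ (k + 6) ≠ 0 := by positivity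
      field_simp
      ring
  -- second limit
  have heq : ∀ n : ℕ, 3 ≤ n → ((a (n - 1) : ℝ) - 3 * n / 16) =
      -3 / 64 - ((psi (n - 3) : ℝ) + 3 * psi (n - 2)) / 2 ^ (n + 3) := by
    intro n hn
    obtain ⟨m, rfl⟩ : ∃ m, n = m + 3 := ⟨n - 3, by omega⟩
    have h := (key m).1
    have e1 : m + 3 - 1 = m + 2 := by omega
    have e2 : m + 3 - 3 = m := by omega
    have e3 : m + 3 - 2 = m + 1 := by omega
    rw [e1, e2, e3, h, hf]
    push_cast
    have h1 : (2:ℝ) ^ (m + 6) ≠ 0 := by positivity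
    have h2 : (2:ℝ) ^ (m + 3 + 3) ≠ 0 := by positivity
    field_simp
    ring
  have hc : Filter.Tendsto (fun n : ℕ => (-3 / 64 : ℝ) - ((psi (n - 3) : ℝ) + 3 * psi (n - 2)) / 2 ^ (n + 3)) Filter.atTop (nhds (-3 / 64)) := by
    have := (tendsto_const_nhds (x := (-3/64 : ℝ)) (f := Filter.atTop (α := ℕ))).sub hlim1
    simpa using this
  apply hc.congr'
  filter_upwards [Filter.eventually_atTop.2 ⟨3, fun n hn => hn⟩] with n hn
  exact (heq n hn).symm
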